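/- Iterated linear substitution at pairwise distinct variables does not depend on the order of the substitutions: for any simple resource term s, pairwise distinct variables x₁,…,xₙ none of which occurs free in any of the simple poly-terms T₁,…,Tₙ, and any permutation σ of {1,…,n}, ∂_{x_{σ(n)}}(… ∂_{x_{σ(1)}}(s, T_{σ(1)}) …, T_{σ(n)}) = ∂_{x_n}(… ∂_{x_1}(s, T_1) …, T_n) in ℕ⟨Δ⟩ (equivalently, over any semiring of coefficients). -/

import Mathlib

set_option maxHeartbeats 1000000

noncomputable section
open scoped Classical

/-- Simple terms of the resource λ-calculus.  The argument of an application is a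
finite multiset of simple terms (a simple poly-term), represented as a `List`
(read up to permutation).  The syntax is enriched with the constant `c0`. -/
inductive RTerm : Type
  | var : ℕ → RTerm
  | lam : ℕ → RTerm → RTerm
  | app : RTerm → List RTerm → RTerm
  | c0  : RTerm

/-- `deg x s` is the number of (free) occurrences of the variable `x` in `s`. -/
def RTerm.deg (x : ℕ) : RTerm → ℕ
  | .var y => if y = x then 1 else 0
  | .lam y t => if y = x then 0 else t.deg x
  | .app t T => t.deg x + (T.attach.map (fun u => u.1.deg x)).sum
  | .c0 => 0
decreasing_by all_goals (try simp_wf) <;> first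
  | (have := List.sizeOf_lt_of_mem u.2; omega)
  | omega

/-- Simultaneous substitution of (optional) terms for variables. -/
def RTerm.msubst (σ : ℕ → Option RTerm) : RTerm → RTerm
  | .var y => (σ y).getD (.var y)
  | .lam y t => .lam y (t.msubst (fun z => if z = y then none else σ z))
  | .app t T => .app (t.msubst σ) (T.attach.map (fun u => u.1.msubst σ))
  | .c0 => .c0
decreasing_by all_goals (try simp_wf) <;> first
  | (have := List.sizeOf_lt_of_mem u.2; omega)
  | omega

/-- `subst x u t` is `t[u/x]`. -/
def RTerm.subst (x : ℕ) (u : RTerm) (t : RTerm) : RTerm :=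
  t.msubst (fun y => if y = x then some u else none)

/-- Size of a simple term. -/
def RTerm.size : RTerm → ℕ
  | .var _ => 1
  | .lam _ t => t.size + 1
  | .app t T => t.size + (T.attach.map (fun u => u.1.size)).sum + 1
  | .c0 => 1
decreasing_by all_goals (try simp_wf) <;> first
  | (have := List.sizeOf_lt_of_mem u.2; omega)
  | omega

end
noncomputable section
open scoped Classical

-- One-step linear derivative: `rderiv x u s` is the formal sum (with
-- ℕ-coefficients) of all the ways of replacing exactly one occurrence of `x`
-- in `s` by `u`.
mutual
def rderiv (x : ℕ) (u : RTerm) : RTerm → (RTerm →₀ ℕ)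
  | .var y => if y = x then Finsupp.single u 1 else 0
  | .lam y t => if y = x then 0 else (rderiv x u t).mapDomain (RTerm.lam y)
  | .app t T => (rderiv x u t).mapDomain (fun s => RTerm.app s T)
      + (rderivList x u T).mapDomain (RTerm.app t)
  | .c0 => 0

def rderivList (x : ℕ) (u : RTerm) : List RTerm → (List RTerm →₀ ℕ)
  | [] => 0
  | t :: T => (rderiv x u t).mapDomain (· :: T) + (rderivList x u T).mapDomain (t :: ·)
end

/-- Linear extension of `rderiv` to formal sums. -/
def rderivC (x : ℕ) (u : RTerm) (𝒮 : RTerm →₀ ℕ) : RTerm →₀ ℕ :=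
  𝒮.sum (fun t n => n • rderiv x u t)

/-- The linear substitution `∂_x(s, t₁⋯tₙ)`: iterated linear derivative of `s`
at `x` along the elements of `T`, keeping only the terms in which all
occurrences of `x` have been consumed (it is `0` unless `deg x s = T.length`,
assuming the usual convention that `x` is not free in the elements of `T`). -/
def rsub (x : ℕ) (T : List RTerm) (s : RTerm) : RTerm →₀ ℕ :=
  (T.foldl (fun 𝒮 u => rderivC x u 𝒮) (Finsupp.single s 1)).filter
    (fun t => t.deg x = 0)

/-- Linear extension of `∂_x` to formal sums in the first argument. -/
def rsubC (x : ℕ) (𝒮 : RTerm →₀ ℕ) (T : List RTerm) : RTerm →₀ ℕ :=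
  𝒮.sum fun s n => n • rsub x T s

end
noncomputable section
open scoped Classical

/-- One-step β-reduction from a simple term to a formal sum:
the redex rule `⟨λx.s⟩T →β ∂_x(s,T)` closed under the contextual rules. -/
inductive Step : RTerm → (RTerm →₀ ℕ) → Prop
  | redex (x : ℕ) (s : RTerm) (T : List RTerm) :
      Step (.app (.lam x s) T) (rsub x T s)
  | appL {s : RTerm} {𝒮 : RTerm →₀ ℕ} (T : List RTerm) :
      Step s 𝒮 → Step (.app s T) (𝒮.mapDomain (fun v => .app v T))
  | appR {s : RTerm} {𝒮 : RTerm →₀ ℕ} (u : RTerm) (T₁ T₂ : List RTerm) :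
      Step s 𝒮 →
        Step (.app u (T₁ ++ s :: T₂)) (𝒮.mapDomain (fun v => .app u (T₁ ++ v :: T₂)))
  | lam {s : RTerm} {𝒮 : RTerm →₀ ℕ} (x : ℕ) :
      Step s 𝒮 → Step (.lam x s) (𝒮.mapDomain (.lam x))

/-- β-reduction on formal ℕ-linear combinations of simple terms:
`s + u →β 𝒮 + u` whenever `s →β 𝒮`. -/
inductive RStep : (RTerm →₀ ℕ) → (RTerm →₀ ℕ) → Prop
  | mk {s : RTerm} {𝒮 U : RTerm →₀ ℕ} :
      Step s 𝒮 → RStep (Finsupp.single s 1 + U) (𝒮 + U)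

/-- An element of `ℕ⟨Δ⟩` is β-normal when no `→β` step applies to it. -/
def RNormal (a : RTerm →₀ ℕ) : Prop := ∀ b, ¬ RStep a b

end
noncomputable section
open scoped Classical

/-- Iterated linear substitution:
`iterPartial [(x₁,T₁),…,(xₙ,Tₙ)] s = ∂_{xₙ}(… ∂_{x₁}(s,T₁) …, Tₙ)`. -/
def iterPartial (l : List (ℕ × List RTerm)) (s : RTerm) : RTerm →₀ ℕ :=
  l.foldl (fun 𝒮 p => rsubC p.1 𝒮 p.2) (Finsupp.single s 1)

end


noncomputable section AuxRAux
open scoped Classical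
namespace RAux

open Finsupp

def liftD {α γ : Type*} (d : α → (γ →₀ ℕ)) (S : α →₀ ℕ) : γ →₀ ℕ :=
  S.sum fun a n => n • d a

@[simp] lemma liftD_zero {α γ : Type*} (d : α → (γ →₀ ℕ)) : liftD d 0 = 0 :=
  Finsupp.sum_zero_index

@[simp] lemma liftD_single {α γ : Type*} (d : α → (γ →₀ ℕ)) (a : α) (n : ℕ) :
    liftD d (Finsupp.single a n) = n • d a :=
  Finsupp.sum_single_index (by simp)

@[simp] lemma liftD_add {α γ : Type*} (d : α → (γ →₀ ℕ)) (S T : α →₀ ℕ) :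
    liftD d (S + T) = liftD d S + liftD d T :=
  Finsupp.sum_add_index' (by simp) (by intros; rw [add_smul])

@[simp] lemma liftD_smul {α γ : Type*} (d : α → (γ →₀ ℕ)) (n : ℕ) (S : α →₀ ℕ) :
    liftD d (n • S) = n • liftD d S := by
  unfold liftD
  rw [Finsupp.sum_smul_index' (fun i => by simp), Finsupp.smul_sum]
  simp [mul_smul]

lemma liftD_congr {α γ : Type*} {d₁ d₂ : α → (γ →₀ ℕ)} (S : α →₀ ℕ)
    (h : ∀ a, d₁ a = d₂ a) : liftD d₁ S = liftD d₂ S := by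
  unfold liftD; exact Finsupp.sum_congr fun a _ => by rw [h]

@[simp] lemma liftD_zero_fun {α γ : Type*} (S : α →₀ ℕ) :
    liftD (fun _ => (0 : γ →₀ ℕ)) S = 0 := by
  unfold liftD; simp

lemma liftD_add_fun {α γ : Type*} (d₁ d₂ : α → (γ →₀ ℕ)) (S : α →₀ ℕ) :
    liftD (fun a => d₁ a + d₂ a) S = liftD d₁ S + liftD d₂ S := by
  unfold liftD
  rw [← Finsupp.sum_add]
  exact Finsupp.sum_congr fun a _ => by rw [smul_add]

lemma liftD_liftD {α β γ : Type*} (d₁ : α → (β →₀ ℕ)) (d₂ : β → (γ →₀ ℕ)) (S : α →₀ ℕ) :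
    liftD d₂ (liftD d₁ S) = liftD (fun a => liftD d₂ (d₁ a)) S := by
  induction S using Finsupp.induction with
  | zero => simp
  | single_add a b f _ _ ih => simp [ih]

lemma liftD_mapDomain {α β γ : Type*} (f : α → β) (d : β → (γ →₀ ℕ)) (S : α →₀ ℕ) :
    liftD d (Finsupp.mapDomain f S) = liftD (fun a => d (f a)) S :=
  Finsupp.sum_mapDomain_index (by simp) (by intros; rw [add_smul])

lemma mapDomain_liftD {α γ δ : Type*} (g : γ → δ) (d : α → (γ →₀ ℕ)) (S : α →₀ ℕ) :
    Finsupp.mapDomain g (liftD d S) = liftD (fun a => Finsupp.mapDomain g (d a)) S := by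
  induction S using Finsupp.induction with
  | zero => simp
  | single_add a b f _ _ ih => simp [Finsupp.mapDomain_add, Finsupp.mapDomain_smul, ih]

lemma liftD_mapDomain_key {α β γ : Type*} (g : α → β → γ) (X : α →₀ ℕ) (Y : β →₀ ℕ) :
    liftD (fun a => Finsupp.mapDomain (g a) Y) X
      = X.sum fun a n => Y.sum fun b m => Finsupp.single (g a b) (n * m) := by
  unfold liftD Finsupp.mapDomain
  refine Finsupp.sum_congr fun a _ => ?_
  rw [Finsupp.smul_sum]
  exact Finsupp.sum_congr fun b _ => by rw [Finsupp.smul_single, smul_eq_mul]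

lemma liftD_mapDomain_comm {α β γ : Type*} (g : α → β → γ) (S : α →₀ ℕ) (R : β →₀ ℕ) :
    liftD (fun a => Finsupp.mapDomain (g a) R) S
      = liftD (fun b => Finsupp.mapDomain (fun a => g a b) S) R := by
  have h2 : liftD (fun b => Finsupp.mapDomain (fun a => g a b) S) R
      = R.sum fun r n => S.sum fun s m => Finsupp.single (g s r) (n * m) :=
    liftD_mapDomain_key (fun b a => g a b) R S
  refine (liftD_mapDomain_key g S R).trans ?_
  rw [Finsupp.sum_comm, h2]
  exact Finsupp.sum_congr fun r _ => Finsupp.sum_congr fun s _ => by rw [mul_comm]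

lemma filter_eq_self_of {γ : Type*} (p : γ → Prop) [DecidablePred p] (S : γ →₀ ℕ)
    (h : ∀ a ∈ S.support, p a) : S.filter p = S := by
  ext a
  rw [Finsupp.filter_apply]
  split_ifs with hp
  · rfl
  · by_contra h0
    exact hp (h a (Finsupp.mem_support_iff.mpr fun hz => h0 hz.symm))

lemma filter_eq_zero_of {γ : Type*} (p : γ → Prop) [DecidablePred p] (S : γ →₀ ℕ)
    (h : ∀ a ∈ S.support, ¬ p a) : S.filter p = 0 := by
  ext a
  rw [Finsupp.filter_apply]
  split_ifs with hp
  · by_contra h0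
    exact h a (Finsupp.mem_support_iff.mpr fun hz => h0 (by simp [hz])) hp
  · rfl

lemma filter_nsmul {γ : Type*} (p : γ → Prop) [DecidablePred p] (n : ℕ) (S : γ →₀ ℕ) :
    (n • S).filter p = n • S.filter p := by
  ext a
  simp only [Finsupp.filter_apply, Finsupp.smul_apply]
  split_ifs <;> simp

lemma filter_filter_comm {γ : Type*} (p q : γ → Prop) [DecidablePred p] [DecidablePred q]
    (S : γ →₀ ℕ) : (S.filter p).filter q = (S.filter q).filter p := by
  ext a
  simp only [Finsupp.filter_apply]
  split_ifs <;> rfl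


@[simp] lemma deg_var (x z : ℕ) : (RTerm.var z).deg x = if z = x then 1 else 0 := by
  rw [RTerm.deg]
@[simp] lemma deg_lam (x z : ℕ) (t : RTerm) :
    (RTerm.lam z t).deg x = if z = x then 0 else t.deg x := by rw [RTerm.deg]
@[simp] lemma deg_app (x : ℕ) (t : RTerm) (T : List RTerm) :
    (RTerm.app t T).deg x = t.deg x + (T.map (RTerm.deg x)).sum := by
  rw [RTerm.deg, List.attach_map_val]
@[simp] lemma deg_c0 (x : ℕ) : RTerm.c0.deg x = 0 := by rw [RTerm.deg]

lemma rderiv_var (x : ℕ) (u : RTerm) (z : ℕ) :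
    rderiv x u (.var z) = if z = x then Finsupp.single u 1 else 0 := by rw [rderiv]
lemma rderiv_lam (x : ℕ) (u : RTerm) (z : ℕ) (t : RTerm) :
    rderiv x u (.lam z t) = if z = x then 0 else (rderiv x u t).mapDomain (RTerm.lam z) := by
  rw [rderiv]
lemma rderiv_app (x : ℕ) (u : RTerm) (t : RTerm) (T : List RTerm) :
    rderiv x u (.app t T) = (rderiv x u t).mapDomain (fun s => RTerm.app s T)
      + (rderivList x u T).mapDomain (RTerm.app t) := by rw [rderiv]
lemma rderiv_c0 (x : ℕ) (u : RTerm) : rderiv x u .c0 = 0 := by rw [rderiv]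
lemma rderivList_nil (x : ℕ) (u : RTerm) : rderivList x u [] = 0 := by rw [rderivList]
lemma rderivList_cons (x : ℕ) (u t : RTerm) (T : List RTerm) :
    rderivList x u (t :: T)
      = (rderiv x u t).mapDomain (· :: T) + (rderivList x u T).mapDomain (t :: ·) := by
  rw [rderivList]

mutual
theorem rderiv_of_deg_zero (y : ℕ) (v : RTerm) :
    (t : RTerm) → t.deg y = 0 → rderiv y v t = 0
  | .var z, h => by
      rw [rderiv_var, if_neg]
      intro hz; rw [deg_var, if_pos hz] at h; exact one_ne_zero h
  | .lam z s, h => by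
      rw [rderiv_lam]
      split_ifs with hz
      · rfl
      · rw [deg_lam, if_neg hz] at h
        rw [rderiv_of_deg_zero y v s h, Finsupp.mapDomain_zero]
  | .app s T, h => by
      rw [deg_app] at h
      have hs : (T.map (RTerm.deg y)).sum = 0 := by omega
      rw [rderiv_app, rderiv_of_deg_zero y v s (by omega),
        rderivList_of_deg_zero y v T
          (fun t ht => List.sum_eq_zero_iff.mp hs _ (List.mem_map_of_mem ht)),
        Finsupp.mapDomain_zero, Finsupp.mapDomain_zero, add_zero]
  | .c0, _ => by rw [rderiv_c0]

theorem rderivList_of_deg_zero (y : ℕ) (v : RTerm) :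
    (T : List RTerm) → (∀ t ∈ T, t.deg y = 0) → rderivList y v T = 0
  | [], _ => by rw [rderivList_nil]
  | t :: T, h => by
      rw [rderivList_cons, rderiv_of_deg_zero y v t (h t (by simp)),
        rderivList_of_deg_zero y v T (fun s hs => h s (by simp [hs])),
        Finsupp.mapDomain_zero, Finsupp.mapDomain_zero, add_zero]
end

mutual
theorem deg_of_mem_rderiv (x y : ℕ) (v : RTerm) (hxy : x ≠ y) (hv : v.deg x = 0) :
    (t : RTerm) → ∀ t' ∈ (rderiv y v t).support, t'.deg x = t.deg x
  | .var z => by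
      intro t' ht'
      rw [rderiv_var] at ht'
      split_ifs at ht' with hz
      · rw [Finsupp.support_single_ne_zero _ one_ne_zero, Finset.mem_singleton] at ht'
        subst ht'; subst hz
        rw [deg_var, if_neg (fun h => hxy h.symm)]
        exact hv
      · simp at ht'
  | .lam z s => by
      intro t' ht'
      rw [rderiv_lam] at ht'
      split_ifs at ht' with hz
      · simp at ht'
      · obtain ⟨a, ha, rfl⟩ := Finset.mem_image.mp (Finsupp.mapDomain_support ht')
        rw [deg_lam, deg_lam]
        split_ifs with hzx
        · rfl
        · exact deg_of_mem_rderiv x y v hxy hv s a ha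
  | .app s T => by
      intro t' ht'
      rw [rderiv_app] at ht'
      rcases Finset.mem_union.mp (Finsupp.support_add ht') with h | h
      · obtain ⟨a, ha, rfl⟩ := Finset.mem_image.mp (Finsupp.mapDomain_support h)
        rw [deg_app, deg_app, deg_of_mem_rderiv x y v hxy hv s a ha]
      · obtain ⟨B, hB, rfl⟩ := Finset.mem_image.mp (Finsupp.mapDomain_support h)
        rw [deg_app, deg_app, deg_of_mem_rderivList x y v hxy hv T B hB]
  | .c0 => by intro t' ht'; rw [rderiv_c0] at ht'; simp at ht'

theorem deg_of_mem_rderivList (x y : ℕ) (v : RTerm) (hxy : x ≠ y) (hv : v.deg x = 0) :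
    (T : List RTerm) → ∀ T' ∈ (rderivList y v T).support,
      (T'.map (RTerm.deg x)).sum = (T.map (RTerm.deg x)).sum
  | [] => by intro T' hT'; rw [rderivList_nil] at hT'; simp at hT'
  | t :: T => by
      intro T' hT'
      rw [rderivList_cons] at hT'
      rcases Finset.mem_union.mp (Finsupp.support_add hT') with h | h
      · obtain ⟨a, ha, rfl⟩ := Finset.mem_image.mp (Finsupp.mapDomain_support h)
        rw [List.map_cons, List.map_cons, List.sum_cons, List.sum_cons,
          deg_of_mem_rderiv x y v hxy hv t a ha]
      · obtain ⟨B, hB, rfl⟩ := Finset.mem_image.mp (Finsupp.mapDomain_support h)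
        rw [List.map_cons, List.map_cons, List.sum_cons, List.sum_cons,
          deg_of_mem_rderivList x y v hxy hv T B hB]
end

mutual
theorem rderiv_comm (x y : ℕ) (u v : RTerm) (hxy : x ≠ y)
    (hu : u.deg y = 0) (hv : v.deg x = 0) :
    (t : RTerm) → liftD (rderiv y v) (rderiv x u t) = liftD (rderiv x u) (rderiv y v t)
  | .var z => by
      rw [rderiv_var, rderiv_var]
      by_cases hzx : z = x
      · rw [if_pos hzx, if_neg (show ¬ z = y by omega), liftD_single, one_smul,
          rderiv_of_deg_zero y v u hu, liftD_zero]
      · by_cases hzy : z = y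
        · rw [if_pos hzy, if_neg hzx, liftD_zero, liftD_single, one_smul,
            rderiv_of_deg_zero x u v hv]
        · rw [if_neg hzx, if_neg hzy, liftD_zero, liftD_zero]
  | .lam z s => by
      rw [rderiv_lam, rderiv_lam]
      by_cases hzx : z = x
      · rw [if_pos hzx, if_neg (show ¬ z = y by omega), liftD_zero, liftD_mapDomain]
        refine Eq.symm ((liftD_congr _ fun a => ?_).trans (liftD_zero_fun _))
        rw [rderiv_lam, if_pos hzx]
      · by_cases hzy : z = y
        · rw [if_pos hzy, if_neg hzx, liftD_zero, liftD_mapDomain]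
          refine (liftD_congr _ fun a => ?_).trans (liftD_zero_fun _)
          rw [rderiv_lam, if_pos hzy]
        · rw [if_neg hzx, if_neg hzy, liftD_mapDomain, liftD_mapDomain,
            liftD_congr _ (fun a => by rw [rderiv_lam, if_neg hzy] :
              ∀ a, rderiv y v (RTerm.lam z a)
                = (rderiv y v a).mapDomain (RTerm.lam z)),
            liftD_congr _ (fun a => by rw [rderiv_lam, if_neg hzx] :
              ∀ a, rderiv x u (RTerm.lam z a)
                = (rderiv x u a).mapDomain (RTerm.lam z)),
            ← mapDomain_liftD, ← mapDomain_liftD,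
            rderiv_comm x y u v hxy hu hv s]
  | .app s T => by
      rw [rderiv_app, rderiv_app, liftD_add, liftD_add,
        liftD_mapDomain, liftD_mapDomain, liftD_mapDomain, liftD_mapDomain,
        liftD_congr _ (fun a => by rw [rderiv_app] :
          ∀ a, rderiv y v (RTerm.app a T)
            = (rderiv y v a).mapDomain (fun s' => RTerm.app s' T)
              + (rderivList y v T).mapDomain (RTerm.app a)),
        liftD_congr _ (fun B => by rw [rderiv_app] :
          ∀ B, rderiv y v (RTerm.app s B)
            = (rderiv y v s).mapDomain (fun s' => RTerm.app s' B)
              + (rderivList y v B).mapDomain (RTerm.app s)),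
        liftD_congr _ (fun a => by rw [rderiv_app] :
          ∀ a, rderiv x u (RTerm.app a T)
            = (rderiv x u a).mapDomain (fun s' => RTerm.app s' T)
              + (rderivList x u T).mapDomain (RTerm.app a)),
        liftD_congr _ (fun B => by rw [rderiv_app] :
          ∀ B, rderiv x u (RTerm.app s B)
            = (rderiv x u s).mapDomain (fun s' => RTerm.app s' B)
              + (rderivList x u B).mapDomain (RTerm.app s)),
        liftD_add_fun, liftD_add_fun, liftD_add_fun, liftD_add_fun,
        ← mapDomain_liftD, ← mapDomain_liftD, ← mapDomain_liftD, ← mapDomain_liftD,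
        liftD_mapDomain_comm (fun a B => RTerm.app a B),
        liftD_mapDomain_comm (fun a B => RTerm.app a B),
        rderiv_comm x y u v hxy hu hv s,
        rderivList_comm x y u v hxy hu hv T]
      abel
  | .c0 => by rw [rderiv_c0, rderiv_c0, liftD_zero, liftD_zero]

theorem rderivList_comm (x y : ℕ) (u v : RTerm) (hxy : x ≠ y)
    (hu : u.deg y = 0) (hv : v.deg x = 0) :
    (T : List RTerm) → liftD (rderivList y v) (rderivList x u T)
      = liftD (rderivList x u) (rderivList y v T)
  | [] => by rw [rderivList_nil, liftD_zero, rderivList_nil, liftD_zero]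
  | t :: T => by
      rw [rderivList_cons, rderivList_cons, liftD_add, liftD_add,
        liftD_mapDomain, liftD_mapDomain, liftD_mapDomain, liftD_mapDomain,
        liftD_congr _ (fun a => by rw [rderivList_cons] :
          ∀ a, rderivList y v (a :: T)
            = (rderiv y v a).mapDomain (· :: T) + (rderivList y v T).mapDomain (a :: ·)),
        liftD_congr _ (fun B => by rw [rderivList_cons] :
          ∀ B, rderivList y v (t :: B)
            = (rderiv y v t).mapDomain (· :: B) + (rderivList y v B).mapDomain (t :: ·)),
        liftD_congr _ (fun a => by rw [rderivList_cons] :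
          ∀ a, rderivList x u (a :: T)
            = (rderiv x u a).mapDomain (· :: T) + (rderivList x u T).mapDomain (a :: ·)),
        liftD_congr _ (fun B => by rw [rderivList_cons] :
          ∀ B, rderivList x u (t :: B)
            = (rderiv x u t).mapDomain (· :: B) + (rderivList x u B).mapDomain (t :: ·)),
        liftD_add_fun, liftD_add_fun, liftD_add_fun, liftD_add_fun,
        ← mapDomain_liftD, ← mapDomain_liftD, ← mapDomain_liftD, ← mapDomain_liftD,
        liftD_mapDomain_comm (fun a B => a :: B),
        liftD_mapDomain_comm (fun a B => a :: B),
        rderiv_comm x y u v hxy hu hv t,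
        rderivList_comm x y u v hxy hu hv T]
      abel
end

lemma rderivC_eq (x : ℕ) (u : RTerm) (S : RTerm →₀ ℕ) :
    rderivC x u S = liftD (rderiv x u) S := rfl

lemma rderivC_comm (x y : ℕ) (u v : RTerm) (hxy : x ≠ y)
    (hu : u.deg y = 0) (hv : v.deg x = 0) (S : RTerm →₀ ℕ) :
    rderivC y v (rderivC x u S) = rderivC x u (rderivC y v S) := by
  rw [rderivC_eq, rderivC_eq, rderivC_eq, rderivC_eq, liftD_liftD, liftD_liftD]
  exact liftD_congr _ fun t => rderiv_comm x y u v hxy hu hv t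

lemma rderivC_zero (x : ℕ) (u : RTerm) : rderivC x u 0 = 0 := by
  rw [rderivC_eq, liftD_zero]

lemma rderivC_add (x : ℕ) (u : RTerm) (S₁ S₂ : RTerm →₀ ℕ) :
    rderivC x u (S₁ + S₂) = rderivC x u S₁ + rderivC x u S₂ := by
  rw [rderivC_eq, liftD_add, rderivC_eq, rderivC_eq]

lemma rderivC_smul (x : ℕ) (u : RTerm) (n : ℕ) (S : RTerm →₀ ℕ) :
    rderivC x u (n • S) = n • rderivC x u S := by
  rw [rderivC_eq, liftD_smul, rderivC_eq]

lemma filter_rderivC (x y : ℕ) (v : RTerm) (hxy : x ≠ y) (hv : v.deg x = 0)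
    (S : RTerm →₀ ℕ) :
    (rderivC y v S).filter (fun t => t.deg x = 0)
      = rderivC y v (S.filter (fun t => t.deg x = 0)) := by
  induction S using Finsupp.induction with
  | zero => rw [rderivC_zero, Finsupp.filter_zero, rderivC_zero]
  | single_add a b f _ _ ih =>
      rw [rderivC_add, Finsupp.filter_add, Finsupp.filter_add, rderivC_add, ih]
      congr 1
      rw [rderivC_eq, liftD_single, filter_nsmul]
      by_cases hdeg : a.deg x = 0
      · rw [filter_eq_self_of _ _ (fun t' ht' => by
            rw [deg_of_mem_rderiv x y v hxy hv a t' ht']; exact hdeg),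
          Finsupp.filter_single_of_pos (fun t => RTerm.deg x t = 0) hdeg,
          rderivC_eq, liftD_single]
      · rw [filter_eq_zero_of _ _ (fun t' ht' => by
            rw [deg_of_mem_rderiv x y v hxy hv a t' ht']; exact hdeg),
          Finsupp.filter_single_of_neg (fun t => RTerm.deg x t = 0) hdeg,
          rderivC_zero, smul_zero]

def Ffold (x : ℕ) (T : List RTerm) (S : RTerm →₀ ℕ) : RTerm →₀ ℕ :=
  T.foldl (fun 𝒮 u => rderivC x u 𝒮) S

@[simp] lemma Ffold_nil (x : ℕ) (S : RTerm →₀ ℕ) : Ffold x [] S = S := rfl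

lemma Ffold_cons (x : ℕ) (u : RTerm) (T : List RTerm) (S : RTerm →₀ ℕ) :
    Ffold x (u :: T) S = Ffold x T (rderivC x u S) := rfl

lemma Ffold_zero (x : ℕ) (T : List RTerm) : Ffold x T 0 = 0 := by
  induction T with
  | nil => rfl
  | cons u T ih => rw [Ffold_cons, rderivC_zero, ih]

lemma Ffold_add (x : ℕ) (T : List RTerm) (S₁ S₂ : RTerm →₀ ℕ) :
    Ffold x T (S₁ + S₂) = Ffold x T S₁ + Ffold x T S₂ := by
  induction T generalizing S₁ S₂ with
  | nil => rfl
  | cons u T ih => rw [Ffold_cons, rderivC_add, ih, Ffold_cons, Ffold_cons]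

lemma Ffold_smul (x : ℕ) (T : List RTerm) (n : ℕ) (S : RTerm →₀ ℕ) :
    Ffold x T (n • S) = n • Ffold x T S := by
  induction T generalizing S with
  | nil => rfl
  | cons u T ih => rw [Ffold_cons, rderivC_smul, ih, Ffold_cons]

lemma rsub_eq (x : ℕ) (T : List RTerm) (s : RTerm) :
    rsub x T s = (Ffold x T (Finsupp.single s 1)).filter (fun t => t.deg x = 0) := rfl

lemma rsubC_eq (x : ℕ) (S : RTerm →₀ ℕ) (T : List RTerm) :
    rsubC x S T = (Ffold x T S).filter (fun t => t.deg x = 0) := by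
  induction S using Finsupp.induction with
  | zero =>
      show liftD (fun s => rsub x T s) 0 = _
      rw [liftD_zero, Ffold_zero, Finsupp.filter_zero]
  | single_add a b f _ _ ih =>
      show liftD (fun s => rsub x T s) (Finsupp.single a b + f) = _
      rw [liftD_add, liftD_single, Ffold_add, Finsupp.filter_add]
      have hf : rsubC x f T = (Ffold x T f).filter (fun t => t.deg x = 0) := ih
      rw [show liftD (fun s => rsub x T s) f = rsubC x f T from rfl, hf]
      congr 1
      rw [rsub_eq, ← filter_nsmul, ← Ffold_smul, Finsupp.smul_single, smul_eq_mul, mul_one]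

lemma rderivC_Ffold (x y : ℕ) (v : RTerm) (T : List RTerm) (hxy : x ≠ y)
    (hv : v.deg x = 0) (hT : ∀ u ∈ T, u.deg y = 0) (S : RTerm →₀ ℕ) :
    rderivC y v (Ffold x T S) = Ffold x T (rderivC y v S) := by
  induction T generalizing S with
  | nil => rfl
  | cons u T ih =>
      rw [Ffold_cons, ih (fun w hw => hT w (by simp [hw])),
        rderivC_comm x y u v hxy (hT u (by simp)) hv, Ffold_cons]

lemma Ffold_Ffold (x y : ℕ) (T U : List RTerm) (hxy : x ≠ y)
    (hT : ∀ u ∈ T, u.deg y = 0) (hU : ∀ v ∈ U, v.deg x = 0) (S : RTerm →₀ ℕ) :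
    Ffold y U (Ffold x T S) = Ffold x T (Ffold y U S) := by
  induction U generalizing S with
  | nil => rfl
  | cons v U ih =>
      rw [Ffold_cons, Ffold_cons, rderivC_Ffold x y v T hxy (hU v (by simp)) hT,
        ih (fun w hw => hU w (by simp [hw]))]

lemma filter_Ffold (x y : ℕ) (U : List RTerm) (hxy : x ≠ y)
    (hU : ∀ v ∈ U, v.deg x = 0) (S : RTerm →₀ ℕ) :
    (Ffold y U S).filter (fun t => t.deg x = 0)
      = Ffold y U (S.filter (fun t => t.deg x = 0)) := by
  induction U generalizing S with
  | nil => rfl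
  | cons v U ih =>
      rw [Ffold_cons, ih (fun w hw => hU w (by simp [hw])),
        filter_rderivC x y v hxy (hU v (by simp)), Ffold_cons]

lemma rsubC_comm (x y : ℕ) (T U : List RTerm) (hxy : x ≠ y)
    (hTy : ∀ u ∈ T, u.deg y = 0) (hUx : ∀ v ∈ U, v.deg x = 0) (S : RTerm →₀ ℕ) :
    rsubC y (rsubC x S T) U = rsubC x (rsubC y S U) T := by
  rw [rsubC_eq, rsubC_eq, rsubC_eq, rsubC_eq,
    ← filter_Ffold x y U hxy hUx, Ffold_Ffold x y T U hxy hTy hUx,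
    filter_filter_comm, filter_Ffold y x T (fun h => hxy h.symm) hTy]

end RAux
end AuxRAux

/-- **Iterated linear substitution at pairwise distinct variables does not
depend on the order of the substitutions**: if the variables `x₁,…,xₙ` are
pairwise distinct and none of them occurs (free) in any of the poly-terms
`T₁,…,Tₙ`, then performing the substitutions in the order prescribed by any
permutation `σ` gives the same result. -/
theorem iterPartial_perm_invariant (n : ℕ) (xs : Fin n → ℕ) (Ts : Fin n → List RTerm)
    (hinj : Function.Injective xs)
    (hfresh : ∀ i j : Fin n, ∀ u ∈ Ts j, u.deg (xs i) = 0)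
    (σ : Equiv.Perm (Fin n)) (s : RTerm) :
    iterPartial ((List.finRange n).map fun i => (xs (σ i), Ts (σ i))) s =
      iterPartial ((List.finRange n).map fun i => (xs i, Ts i)) s := by
  classical
  have hperm : (((List.finRange n).map σ).map fun i => (xs i, Ts i)).Perm
      ((List.finRange n).map fun i => (xs i, Ts i)) := by
    refine List.Perm.map _ ?_
    refine (List.perm_ext_iff_of_nodup
      ((List.nodup_finRange n).map σ.injective) (List.nodup_finRange n)).mpr ?_
    intro a
    simp only [List.mem_map, List.mem_finRange, true_and, iff_true]
    exact ⟨σ.symm a, σ.apply_symm_apply a⟩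
  have hL : ((List.finRange n).map fun i => (xs (σ i), Ts (σ i)))
      = ((List.finRange n).map σ).map fun i => (xs i, Ts i) := by
    rw [List.map_map]; rfl
  rw [hL]
  refine List.Perm.foldl_eq' hperm ?_ _
  intro p hp q hq z
  obtain ⟨i, -, rfl⟩ := List.mem_map.mp hp
  obtain ⟨j, -, rfl⟩ := List.mem_map.mp hq
  by_cases hij : i = j
  · subst hij; rfl
  · exact RAux.rsubC_comm (xs i) (xs j) (Ts i) (Ts j)
      (fun h => hij (hinj h)) (fun u hu => hfresh j i u hu)
      (fun u hu => hfresh i j u hu) z
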